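/- Let (G,N) be an equal order pair. If M is a nontrivial subgroup of G such that M ∩ N = 1 and every element of M commutes with every element of N, then there is a prime p such that both M and N are p-groups, and moreover n^p = 1 for every n ∈ N (N has exponent p). -/
import Mathlib

/-- `(G, N)` is an *equal order pair* if `N` is a proper, nontrivial, normal subgroup of `G`
and for every `x ∈ G \ N` and every `n ∈ N`, the order of `x * n` equals the order of `x`. -/
def IsEqualOrderPair {G : Type*} [Group G] (N : Subgroup G) : Prop :=
  N.Normal ∧ N ≠ ⊥ ∧ N ≠ ⊤ ∧ ∀ x ∉ N, ∀ n ∈ N, orderOf (x * n) = orderOf x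

theorem stmt12 {G : Type*} [Group G] [Finite G] (N : Subgroup G)
    (h : IsEqualOrderPair N) (M : Subgroup G) (hMbot : M ≠ ⊥)
    (hMN : M ⊓ N = ⊥) (hcomm : ∀ m ∈ M, ∀ n ∈ N, m * n = n * m) :
    ∃ p : ℕ, p.Prime ∧ IsPGroup p ↥M ∧ IsPGroup p ↥N ∧ ∀ n ∈ N, n ^ p = 1 := by
  obtain ⟨hN, hNbot, hNtop, hord⟩ := h
  -- key divisibility: the order of any element of N divides the order of any
  -- nontrivial element of M
  have key : ∀ m ∈ M, m ≠ 1 → ∀ n ∈ N, orderOf n ∣ orderOf m := by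
    intro m hm hm1 n hn
    have hmN : m ∉ N := by
      intro hmn
      exact hm1 (Subgroup.mem_bot.mp (hMN ▸ Subgroup.mem_inf.mpr ⟨hm, hmn⟩))
    have h1 : orderOf (m * n) = orderOf m := hord m hmN n hn
    have hc : Commute m n := hcomm m hm n hn
    have h2 : (m * n) ^ orderOf m = 1 := by rw [← h1]; exact pow_orderOf_eq_one _
    rw [hc.mul_pow, pow_orderOf_eq_one, one_mul] at h2
    exact orderOf_dvd_of_pow_eq_one h2
  -- pick a nontrivial element of N and a prime p dividing its order
  obtain ⟨n₀, hn₀1⟩ := Subgroup.ne_bot_iff_exists_ne_one.mp hNbot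
  have hn₀1' : (n₀ : G) ≠ 1 := fun hh => hn₀1 (Subtype.ext hh)
  have hord₀ : orderOf (n₀ : G) ≠ 1 := by simpa using hn₀1'
  set p := (orderOf (n₀ : G)).minFac with hpdef
  have hp : p.Prime := Nat.minFac_prime hord₀
  have hpdvd : p ∣ orderOf (n₀ : G) := Nat.minFac_dvd _
  -- p divides the order of every nontrivial element of M
  have hpM : ∀ m ∈ M, m ≠ 1 → p ∣ orderOf m := fun m hm hm1 =>
    hpdvd.trans (key m hm hm1 n₀ n₀.2)
  -- every element of M has p-power order
  have hMpow : ∀ m ∈ M, ∃ k, orderOf m = p ^ k := by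
    intro m hm
    by_cases hm1 : m = 1
    · exact ⟨0, by simp [hm1]⟩
    have hpos : orderOf m ≠ 0 := (orderOf_pos m).ne'
    refine ⟨(orderOf m).primeFactorsList.length,
      Nat.eq_prime_pow_of_unique_prime_dvd hpos ?_⟩
    intro q hq hqdvd
    set m' := m ^ (orderOf m / q) with hm'def
    have hordm' : orderOf m' = q := orderOf_pow_orderOf_div hpos hqdvd
    have hm'M : m' ∈ M := M.pow_mem hm _
    have hm'1 : m' ≠ 1 := by
      intro hh
      rw [hh, orderOf_one] at hordm'
      exact hq.one_lt.ne' hordm'.symm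
    have := hpM m' hm'M hm'1
    rw [hordm'] at this
    exact ((Nat.prime_dvd_prime_iff_eq hp hq).mp this).symm
  -- find an element of M of order exactly p
  obtain ⟨m₀, hm₀1⟩ := Subgroup.ne_bot_iff_exists_ne_one.mp hMbot
  have hm₀1' : (m₀ : G) ≠ 1 := fun hh => hm₀1 (Subtype.ext hh)
  obtain ⟨k, hk⟩ := hMpow (m₀ : G) m₀.2
  have hk1 : k ≠ 0 := by
    rintro rfl
    simp only [pow_zero, orderOf_eq_one_iff] at hk
    exact hm₀1' hk
  set m₁ := (m₀ : G) ^ p ^ (k - 1) with hm₁def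
  have hm₁M : m₁ ∈ M := M.pow_mem m₀.2 _
  have hm₁1 : m₁ ≠ 1 := by
    intro hh
    have : orderOf (m₀ : G) ∣ p ^ (k - 1) := orderOf_dvd_of_pow_eq_one hh
    rw [hk] at this
    have hle := (Nat.pow_dvd_pow_iff_le_right hp.one_lt).mp this
    omega
  have hm₁p : m₁ ^ p = 1 := by
    rw [hm₁def, ← pow_mul, ← pow_succ]
    have : k - 1 + 1 = k := Nat.succ_pred_eq_of_pos (Nat.pos_of_ne_zero hk1)
    rw [this, ← hk, pow_orderOf_eq_one]
  -- every element of N has order dividing p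
  have hNdvd : ∀ n ∈ N, orderOf n ∣ p := by
    intro n hn
    have := key m₁ hm₁M hm₁1 n hn
    exact this.trans (orderOf_dvd_of_pow_eq_one hm₁p)
  refine ⟨p, hp, ?_, ?_, ?_⟩
  · intro g
    obtain ⟨k', hk'⟩ := hMpow (g : G) g.2
    refine ⟨k', ?_⟩
    have : (g : G) ^ p ^ k' = 1 := by rw [← hk']; exact pow_orderOf_eq_one _
    exact Subtype.ext (by simpa using this)
  · intro g
    refine ⟨1, ?_⟩
    have : (g : G) ^ p = 1 := orderOf_dvd_iff_pow_eq_one.mp (hNdvd (g : G) g.2)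
    exact Subtype.ext (by simpa using this)
  · intro n hn
    exact orderOf_dvd_iff_pow_eq_one.mp (hNdvd n hn)
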